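/- An n-element poset P admits a tangled labeling if and only if there is some element of P that is strictly greater (in P) than exactly one other element of P. -/

import Mathlib

open scoped Classical

noncomputable section

abbrev Labeling (P : Type*) [Fintype P] : Type _ := P ≃ Fin (Fintype.card P)

variable {P : Type*} [Fintype P] [PartialOrder P]

def IsLinearExt (L : Labeling P) : Prop := ∀ x y : P, x ≤ y → L x ≤ L y

def lSucc (L : Labeling P) (v : P)
    (h : (Finset.univ.filter fun y => v < y).Nonempty) : P :=
  L.symm (((Finset.univ.filter fun y => v < y).image L).min' (h.image _))

lemma lt_lSucc (L : Labeling P) (v : P)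
    (h : (Finset.univ.filter fun y => v < y).Nonempty) : v < lSucc L v h := by
  have hmem := Finset.min'_mem ((Finset.univ.filter fun y => v < y).image L) (h.image _)
  obtain ⟨y, hy, hLy⟩ := Finset.mem_image.mp hmem
  have heq : lSucc L v h = y := by
    unfold lSucc
    rw [← hLy, Equiv.symm_apply_apply]
  rw [heq]
  exact (Finset.mem_filter.mp hy).2

def promChainFrom (L : Labeling P) (v : P) : List P :=
  if h : (Finset.univ.filter fun y => v < y).Nonempty then
    v :: promChainFrom L (lSucc L v h)
  else [v]
termination_by (Finset.univ.filter fun y => v < y).card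
decreasing_by
  apply Finset.card_lt_card
  refine (Finset.ssubset_iff_of_subset ?_).mpr ?_
  · intro z hz
    simp only [Finset.mem_filter, Finset.mem_univ, true_and] at *
    exact lt_trans (lt_lSucc L v h) hz
  · exact ⟨lSucc L v h, by simp [lt_lSucc L v h], by simp⟩

def promote (L : Labeling P) : Labeling P :=
  if h : Nonempty P then
    ((List.formPerm (promChainFrom L (L.symm ⟨0, @Fintype.card_pos P _ h⟩))).trans L).trans
      (finRotate (Fintype.card P)).symm
  else L

/-- The label of `x` under `L`, as an integer in `{1, …, n}`. -/
def labelOf (L : Labeling P) (x : P) : ℕ := (L x : ℕ) + 1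

/-- The largest `a ∈ {0, …, n}` such that for all `j ∈ {n−a+1, …, n}`, the set
`{x ∈ P : j ≤ L(x) ≤ n}` is an upper order ideal of `P`. -/
def frozenA (L : Labeling P) : ℕ :=
  sSup {a : ℕ | a ≤ Fintype.card P ∧
    ∀ j, Fintype.card P - a + 1 ≤ j → j ≤ Fintype.card P →
      IsUpperSet {x : P | j ≤ labelOf L x ∧ labelOf L x ≤ Fintype.card P}}

/-- `x` is frozen with respect to `L` if `n − a + 1 ≤ L(x) ≤ n`, where `a` is as in `frozenA`. -/
def IsFrozen (L : Labeling P) (x : P) : Prop :=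
  Fintype.card P - frozenA L + 1 ≤ labelOf L x

/-- A labeling of an `n`-element poset is tangled if `n ≥ 2` and `∂^{n−2}(L)` is
not a linear extension. -/
def IsTangled (L : Labeling P) : Prop :=
  2 ≤ Fintype.card P ∧ ¬ IsLinearExt (promote^[Fintype.card P - 2] L)

/-- A labeling of an `n`-element poset is `k`-untangled if `n ≥ k + 2` and
`∂^{n−k−2}(L)` is not a linear extension. -/
def IsUntangled (k : ℕ) (L : Labeling P) : Prop :=
  k + 2 ≤ Fintype.card P ∧ ¬ IsLinearExt (promote^[Fintype.card P - k - 2] L)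

/-- The comparability graph of a poset. -/
def compGraph (P : Type*) [PartialOrder P] : SimpleGraph P where
  Adj x y := x ≠ y ∧ (x ≤ y ∨ y ≤ x)
  symm := by
    constructor
    intro x y hxy
    exact ⟨hxy.1.symm, hxy.2.symm⟩
  loopless := by
    constructor
    intro x hx
    exact hx.1 rfl

/-- The standardization of an injective map from a finite type into a linear order:
the unique relabeling by `{1, …, n}` with the same relative order of values. -/
def standardize {R β : Type*} [Fintype R] [LinearOrder β]
    (f : R → β) (hf : Function.Injective f) : R ≃ Fin (Fintype.card R) :=
  have hcard : (Finset.univ.image f).card = Fintype.card R := by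
    rw [Finset.card_image_of_injective _ hf, Finset.card_univ]
  (Equiv.ofBijective (fun x => (⟨f x, by simp⟩ : ↥(Finset.univ.image f)))
    (by
      rw [Fintype.bijective_iff_injective_and_card]
      refine ⟨fun a b hab => hf (congrArg Subtype.val hab), ?_⟩
      rw [Fintype.card_coe, hcard])).trans
    ((Finset.univ.image f).orderIsoOfFin hcard).symm.toEquiv

/-- The toggle operator `τ_{k+1}`: it swaps the labels `k+1` and `k+2` (i.e. the
`Fin`-labels `k` and `k+1`) unless `L⁻¹(k+1) <_P L⁻¹(k+2)`. -/
def toggle (L : Labeling P) (k : ℕ) : Labeling P :=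
  if h : k + 1 < Fintype.card P then
    if L.symm ⟨k, Nat.lt_of_succ_lt h⟩ < L.symm ⟨k + 1, h⟩ then L
    else L.trans (Equiv.swap ⟨k, Nat.lt_of_succ_lt h⟩ ⟨k + 1, h⟩)
  else L

/-- An element `x` is `L`-golden if every element strictly above it has a larger label. -/
def IsGolden (L : Labeling P) (x : P) : Prop := ∀ y : P, x < y → L x < L y

/-- The largest label `n` of an `n`-element poset, as an element of `Fin n`. -/
def topFin (P : Type*) [Fintype P] [Nonempty P] : Fin (Fintype.card P) :=
  ⟨Fintype.card P - 1, Nat.sub_lt Fintype.card_pos Nat.one_pos⟩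

/-! ### Auxiliary lemmas for the tangled labeling theorem -/

section TangledAux

lemma lSucc_min (L : Labeling P) (v : P)
    (h : (Finset.univ.filter fun y => v < y).Nonempty) {z : P} (hz : v < z) :
    L (lSucc L v h) ≤ L z := by
  unfold lSucc
  rw [Equiv.apply_symm_apply]
  exact Finset.min'_le _ _ (Finset.mem_image_of_mem L (by simp [hz]))

lemma promChainFrom_cons (L : Labeling P) (v : P) :
    ∃ t : List P, promChainFrom L v = v :: t := by
  rw [promChainFrom]
  split <;> exact ⟨_, rfl⟩

lemma self_mem_promChainFrom (L : Labeling P) (v : P) : v ∈ promChainFrom L v := by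
  obtain ⟨t, ht⟩ := promChainFrom_cons L v
  rw [ht]; exact List.mem_cons_self

lemma le_of_mem_promChainFrom (L : Labeling P) (v : P) :
    ∀ z ∈ promChainFrom L v, v ≤ z := by
  induction v using promChainFrom.induct L with
  | case1 v h ih =>
    intro z hz
    rw [promChainFrom, dif_pos h] at hz
    rcases List.mem_cons.mp hz with rfl | hz
    · exact le_refl z
    · exact le_of_lt (lt_of_lt_of_le (lt_lSucc L v h) (ih z hz))
  | case2 v h =>
    intro z hz
    rw [promChainFrom, dif_neg h] at hz
    rw [List.mem_singleton.mp hz]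

lemma mem_promChainFrom_cases (L : Labeling P) (v : P) :
    ∀ z ∈ promChainFrom L v, z = v ∨
      ∃ (w : P) (h : (Finset.univ.filter fun y => w < y).Nonempty),
        w ∈ promChainFrom L v ∧ z = lSucc L w h := by
  induction v using promChainFrom.induct L with
  | case1 v h ih =>
    intro z hz
    rw [promChainFrom, dif_pos h] at hz
    rcases List.mem_cons.mp hz with rfl | hz
    · exact Or.inl rfl
    · rcases ih z hz with rfl | ⟨w, hw, hwmem, hws⟩
      · exact Or.inr ⟨v, h, self_mem_promChainFrom L v, rfl⟩
      · refine Or.inr ⟨w, hw, ?_, hws⟩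
        rw [promChainFrom, dif_pos h]
        exact List.mem_cons_of_mem _ hwmem
  | case2 v h =>
    intro z hz
    rw [promChainFrom, dif_neg h] at hz
    exact Or.inl (List.mem_singleton.mp hz)

lemma formPerm_promChainFrom (L : Labeling P) (v : P) :
    ∀ z ∈ promChainFrom L v,
      (promChainFrom L v).formPerm z =
        if h : (Finset.univ.filter fun y => z < y).Nonempty then lSucc L z h else v := by
  induction v using promChainFrom.induct L with
  | case1 v h ih =>
    intro z hz
    rw [promChainFrom, dif_pos h] at hz ⊢
    obtain ⟨t, ht⟩ := promChainFrom_cons L (lSucc L v h)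
    rcases List.mem_cons.mp hz with rfl | hz
    · rw [dif_pos h, ht, List.formPerm_cons_cons, Equiv.Perm.mul_apply]
      have hnot : z ∉ lSucc L z h :: t := by
        rw [← ht]
        intro hmem
        exact absurd (le_of_mem_promChainFrom L _ z hmem) (lt_lSucc L z h).not_ge
      rw [List.formPerm_apply_of_notMem hnot, Equiv.swap_apply_left]
    · have hvz : v < z := lt_of_lt_of_le (lt_lSucc L v h) (le_of_mem_promChainFrom L _ z hz)
      have hsz : lSucc L v h ≤ z := le_of_mem_promChainFrom L _ z hz
      rw [ht, List.formPerm_cons_cons, Equiv.Perm.mul_apply, ← ht, ih z hz]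
      split
      · next h' =>
        exact Equiv.swap_apply_of_ne_of_ne
          (ne_of_gt (lt_trans hvz (lt_lSucc L z h')))
          (ne_of_gt (lt_of_le_of_lt hsz (lt_lSucc L z h')))
      · next => exact Equiv.swap_apply_right v _
  | case2 v h =>
    intro z hz
    rw [promChainFrom, dif_neg h] at hz ⊢
    rw [List.mem_singleton.mp hz, dif_neg h, List.formPerm_singleton, Equiv.Perm.one_apply]

lemma finRotate_symm_val_of_ne {n : ℕ} (i : Fin n) (hi : (i : ℕ) ≠ 0) :
    (((finRotate n).symm i : Fin n) : ℕ) = (i : ℕ) - 1 := by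
  cases n with
  | zero => exact i.elim0
  | succ m =>
    have h1 : (i : ℕ) - 1 < m + 1 := by omega
    have h2 : (⟨(i : ℕ) - 1, h1⟩ : Fin (m + 1)) < Fin.last m := by
      have := i.isLt
      simp only [Fin.lt_iff_val_lt_val, Fin.val_last]
      omega
    have key : finRotate (m + 1) ⟨(i : ℕ) - 1, h1⟩ = i := by
      rw [finRotate_succ_apply]
      apply Fin.ext
      rw [Fin.val_add_one_of_lt h2]
      have := i.isLt
      simp only []
      omega
    have hsymm : (finRotate (m + 1)).symm i = ⟨(i : ℕ) - 1, h1⟩ := by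
      rw [Equiv.symm_apply_eq]
      exact key.symm
    rw [hsymm]

lemma finRotate_symm_val_of_eq {n : ℕ} (i : Fin n) (hi : (i : ℕ) = 0) :
    (((finRotate n).symm i : Fin n) : ℕ) = n - 1 := by
  cases n with
  | zero => exact i.elim0
  | succ m =>
    have hi0 : i = 0 := Fin.ext (by simpa using hi)
    have key : finRotate (m + 1) (Fin.last m) = i := by
      rw [finRotate_succ_apply, Fin.last_add_one, hi0]
    have hsymm : (finRotate (m + 1)).symm i = Fin.last m := by
      rw [Equiv.symm_apply_eq]
      exact key.symm
    rw [hsymm, Fin.val_last]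
    omega

variable [Nonempty P]

/-- The promotion chain of a labeling. -/
def chainOf (L : Labeling P) : List P :=
  promChainFrom L (L.symm ⟨0, Fintype.card_pos⟩)

lemma promote_apply (L : Labeling P) (z : P) :
    promote L z = (finRotate (Fintype.card P)).symm (L ((chainOf L).formPerm z)) := by
  rw [promote, dif_pos ‹Nonempty P›]
  rfl

lemma start_mem_chainOf (L : Labeling P) : L.symm ⟨0, Fintype.card_pos⟩ ∈ chainOf L :=
  self_mem_promChainFrom L _

lemma val_ne_zero_of_not_mem_chainOf (L : Labeling P) {z : P} (hz : z ∉ chainOf L) :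
    (L z : ℕ) ≠ 0 := by
  intro h0
  apply hz
  have : L z = ⟨0, Fintype.card_pos⟩ := Fin.ext h0
  have : z = L.symm ⟨0, Fintype.card_pos⟩ := by
    rw [← this, Equiv.symm_apply_apply]
  rw [this]
  exact start_mem_chainOf L

lemma promote_val_of_not_mem (L : Labeling P) {z : P} (hz : z ∉ chainOf L) :
    (promote L z : ℕ) = (L z : ℕ) - 1 := by
  rw [promote_apply, List.formPerm_apply_of_notMem hz]
  exact finRotate_symm_val_of_ne _ (val_ne_zero_of_not_mem_chainOf L hz)

lemma promote_val_of_mem (L : Labeling P) {z : P} (hz : z ∈ chainOf L)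
    (h : (Finset.univ.filter fun y => z < y).Nonempty) :
    (L (lSucc L z h) : ℕ) ≠ 0 ∧ (promote L z : ℕ) = (L (lSucc L z h) : ℕ) - 1 := by
  have hne : (L (lSucc L z h) : ℕ) ≠ 0 := by
    intro h0
    have h1 : lSucc L z h = L.symm ⟨0, Fintype.card_pos⟩ := by
      have : L (lSucc L z h) = ⟨0, Fintype.card_pos⟩ := Fin.ext h0
      rw [← this, Equiv.symm_apply_apply]
    have h2 : L.symm ⟨0, Fintype.card_pos⟩ ≤ z := le_of_mem_promChainFrom L _ z hz
    exact absurd (lt_of_le_of_lt h2 (lt_lSucc L z h)) (by rw [h1]; exact lt_irrefl _)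
  refine ⟨hne, ?_⟩
  rw [promote_apply, chainOf, formPerm_promChainFrom L _ z hz, dif_pos h]
  exact finRotate_symm_val_of_ne _ hne

lemma promote_val_of_mem_max (L : Labeling P) {z : P} (hz : z ∈ chainOf L)
    (h : ¬ (Finset.univ.filter fun y => z < y).Nonempty) :
    (promote L z : ℕ) = Fintype.card P - 1 := by
  rw [promote_apply, chainOf, formPerm_promChainFrom L _ z hz, dif_neg h, Equiv.apply_symm_apply]
  exact finRotate_symm_val_of_eq _ rfl

/-- The key single-step freezing lemma. -/
lemma isUpperSet_promote (M : Labeling P) (j : ℕ)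
    (U : IsUpperSet {x : P | j + 1 ≤ (M x : ℕ)}) :
    IsUpperSet {x : P | j ≤ (promote M x : ℕ)} := by
  intro x y hxy hx
  simp only [Set.mem_setOf_eq] at hx ⊢
  rcases eq_or_lt_of_le hxy with rfl | hlt
  · exact hx
  have key : ∀ z : P, x < z → j + 1 ≤ (M z : ℕ) := by
    by_cases hxC : x ∈ chainOf M
    · by_cases hfil : (Finset.univ.filter fun y => x < y).Nonempty
      · obtain ⟨hne, heq⟩ := promote_val_of_mem M hxC hfil
        intro z hz
        have h1 : j + 1 ≤ (M (lSucc M x hfil) : ℕ) := by omega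
        have h2 : M (lSucc M x hfil) ≤ M z := lSucc_min M x hfil hz
        exact le_trans h1 h2
      · intro z hz
        exact absurd (Finset.mem_filter.mpr ⟨Finset.mem_univ z, hz⟩) (fun hm => hfil ⟨z, hm⟩)
    · have heq := promote_val_of_not_mem M hxC
      have hne := val_ne_zero_of_not_mem_chainOf M hxC
      intro z hz
      exact U (le_of_lt hz) (by simp only [Set.mem_setOf_eq]; omega)
  have hMy : j + 1 ≤ (M y : ℕ) := key y hlt
  by_cases hyC : y ∈ chainOf M
  · by_cases hfil : (Finset.univ.filter fun y' => y < y').Nonempty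
    · obtain ⟨hne, heq⟩ := promote_val_of_mem M hyC hfil
      have : j + 1 ≤ (M (lSucc M y hfil) : ℕ) := key _ (lt_trans hlt (lt_lSucc M y hfil))
      omega
    · have heq := promote_val_of_mem_max M hyC hfil
      have : (promote M x : ℕ) < Fintype.card P := (promote M x).isLt
      omega
  · have heq := promote_val_of_not_mem M hyC
    omega

/-- The frozen labels lemma: after `k` promotions the top `k` labels occupy upper sets. -/
lemma isUpperSet_iterate_promote (L : Labeling P) (k j : ℕ)
    (hj : Fintype.card P ≤ j + k) :
    IsUpperSet {x : P | j ≤ ((promote^[k] L) x : ℕ)} := by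
  induction k generalizing j with
  | zero =>
    intro x y hxy hx
    simp only [Function.iterate_zero_apply, Set.mem_setOf_eq] at hx
    exact absurd (lt_of_lt_of_le (L x).isLt hj) (not_lt.mpr hx)
  | succ k ih =>
    have := isUpperSet_promote (promote^[k] L) j (ih (j + 1) (by omega))
    simpa only [← Function.iterate_succ_apply' promote k L] using this

end TangledAux

/-- `P` admits a tangled labeling if and only if some element of `P`
is strictly greater than exactly one other element of `P`. -/
theorem tangled_exists_iff :
    (∃ L : Labeling P, IsTangled L) ↔ ∃ x : P, ∃! y : P, y < x := by
  constructor
  · rintro ⟨L, hcard, hnl⟩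
    have hpos : 0 < Fintype.card P := by omega
    haveI : Nonempty P := Fintype.card_pos_iff.mp hpos
    set M := promote^[Fintype.card P - 2] L with hM
    rw [IsLinearExt] at hnl
    push_neg at hnl
    obtain ⟨a, b, hab, hMab⟩ := hnl
    have hfro : ∀ j : ℕ, 2 ≤ j → IsUpperSet {x : P | j ≤ (M x : ℕ)} := by
      intro j hj
      exact isUpperSet_iterate_promote L (Fintype.card P - 2) j (by omega)
    have hvab : (M b : ℕ) < (M a : ℕ) := by
      rw [Fin.lt_iff_val_lt_val] at hMab
      exact hMab
    have hMa1 : (M a : ℕ) ≤ 1 := by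
      by_contra hgt
      have := hfro (M a : ℕ) (by omega) hab (by simp)
      simp only [Set.mem_setOf_eq] at this
      omega
    have hMb0 : (M b : ℕ) = 0 := by omega
    have hMa : (M a : ℕ) = 1 := by omega
    have habne : a ≠ b := fun h => by rw [h] at hvab; omega
    have hablt : a < b := lt_of_le_of_ne hab habne
    refine ⟨b, a, hablt, ?_⟩
    intro c hc
    have hcb : c ≠ b := ne_of_lt hc
    have hMc : (M c : ℕ) ≤ 1 := by
      by_contra hgt
      have := hfro (M c : ℕ) (by omega) (le_of_lt hc) (by simp)
      simp only [Set.mem_setOf_eq] at this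
      omega
    rcases Nat.lt_or_ge (M c : ℕ) 1 with h0 | h1
    · exact absurd (M.injective (Fin.ext (by omega : (M c : ℕ) = (M b : ℕ)))) hcb
    · exact M.injective (Fin.ext (by omega : (M c : ℕ) = (M a : ℕ)))
  · rintro ⟨x₀, y₀, hy₀lt, hy₀uniq⟩
    haveI : Nonempty P := ⟨x₀⟩
    have hne : y₀ ≠ x₀ := ne_of_lt hy₀lt
    have hcard : 2 ≤ Fintype.card P :=
      Fintype.one_lt_card_iff_nontrivial.mpr ⟨⟨y₀, x₀, hne⟩⟩
    have hymin : ∀ z : P, ¬ z < y₀ := by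
      intro z hz
      have := hy₀uniq z (lt_trans hz hy₀lt)
      rw [this] at hz
      exact lt_irrefl _ hz
    set n := Fintype.card P with hn
    have htoplt : n - 1 < n := by omega
    have hseclt : n - 2 < n := by omega
    set e := Fintype.equivFin P with he
    set L1 : Labeling P := e.trans (Equiv.swap (e y₀) ⟨n - 1, htoplt⟩) with hL1
    set L : Labeling P := L1.trans (Equiv.swap (L1 x₀) ⟨n - 2, hseclt⟩) with hL
    have hL1y : L1 y₀ = ⟨n - 1, htoplt⟩ := by
      simp only [hL1, Equiv.trans_apply, Equiv.swap_apply_left]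
    have hL1xne : L1 x₀ ≠ ⟨n - 1, htoplt⟩ := by
      rw [← hL1y]
      exact fun h => hne.symm (L1.injective h)
    have hLx : L x₀ = ⟨n - 2, hseclt⟩ := by
      simp only [hL, Equiv.trans_apply, Equiv.swap_apply_left]
    have hLy : L y₀ = ⟨n - 1, htoplt⟩ := by
      simp only [hL, Equiv.trans_apply, hL1y]
      exact Equiv.swap_apply_of_ne_of_ne (Ne.symm hL1xne)
        (fun h => by simp only [Fin.mk.injEq] at h; omega)
    have main : ∀ k : ℕ, k ≤ n - 2 →
        ((promote^[k] L) x₀ : ℕ) = n - 2 - k ∧ ((promote^[k] L) y₀ : ℕ) = n - 1 - k := by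
      intro k
      induction k with
      | zero =>
        intro _
        refine ⟨?_, ?_⟩ <;> simp [hLx, hLy]
      | succ k ih =>
        intro hk
        obtain ⟨ihx, ihy⟩ := ih (by omega)
        set M := promote^[k] L with hMdef
        have hMx0 : (M x₀ : ℕ) ≠ 0 := by omega
        have hMy0 : (M y₀ : ℕ) ≠ 0 := by omega
        have hyC : y₀ ∉ chainOf M := by
          intro hmem
          rcases mem_promChainFrom_cases M _ y₀ hmem with h1 | ⟨w, hw, hwmem, hws⟩
          · apply hMy0
            rw [h1, Equiv.apply_symm_apply]
          · exact hymin w (hws ▸ lt_lSucc M w hw)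
        have hxC : x₀ ∉ chainOf M := by
          intro hmem
          rcases mem_promChainFrom_cases M _ x₀ hmem with h1 | ⟨w, hw, hwmem, hws⟩
          · apply hMx0
            rw [h1, Equiv.apply_symm_apply]
          · have hwx : w < x₀ := hws ▸ lt_lSucc M w hw
            have : w = y₀ := hy₀uniq w hwx
            rw [this] at hwmem
            exact hyC hwmem
        have hx' := promote_val_of_not_mem M hxC
        have hy' := promote_val_of_not_mem M hyC
        rw [Function.iterate_succ_apply', ← hMdef]
        constructor
        · rw [hx']; omega
        · rw [hy']; omega
    obtain ⟨hfx, hfy⟩ := main (n - 2) le_rfl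
    refine ⟨L, hcard, ?_⟩
    intro hlin
    have hit := hlin y₀ x₀ (le_of_lt hy₀lt)
    rw [Fin.le_def] at hit
    have hfx' : ((promote^[Fintype.card P - 2] L) x₀ : ℕ) = n - 2 - (n - 2) := hfx
    have hfy' : ((promote^[Fintype.card P - 2] L) y₀ : ℕ) = n - 1 - (n - 2) := hfy
    have hn2 : 2 ≤ n := hcard
    omega

end
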